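/- The quotient ring ℤ[X]/I₀ is generated as a ℤ-module by the image of the subring of ℤ[X]/I₀ generated by x̄, ȳ, z̄₊, z̄₋ together with the elements x̄^i ȳ^l w̄_{m,η} for 0 ≤ i ≤ n−1, 0 ≤ l ≤ n−2, m ≥ 1 and η ∈ k̄. Equivalently, ℤ[X]/I₀ is spanned over ℤ by the images of all monomials in x, y, z₊, z₋ together with the elements x̄^i ȳ^l w̄_{m,η} with 0 ≤ i ≤ n−1, 0 ≤ l ≤ n−2, m ≥ 1, η ∈ k̄. -/

import Mathlib

open MvPolynomial

/- The set of variables `X = {x, y, z₊, z₋} ∪ {w_{m,η} | m ≥ 1, η ∈ k̄}`, where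
`k̄ = k ∪ {∞}` is encoded as `Option k` (with `none` playing the role of `∞`).
The variables `x, y, z₊, z₋` are `Sum.inl 0, Sum.inl 1, Sum.inl 2, Sum.inl 3`,
and `w_{m,η}` is `Sum.inr (m, η)`. -/
abbrev BigVar (k : Type*) := Fin 4 ⊕ (ℕ+ × Option k)

/-- The variable `w_{m,η}` of `ℤ[X]`. -/
noncomputable def W {k : Type*} (m : ℕ+) (η : Option k) : MvPolynomial (BigVar k) ℤ :=
  X (Sum.inr (m, η))

/-- `f₁(x,y) = ∑_{i=0}^{c(n-2)} (-1)^i binom(n-1-i, i) x^i y^{n-1-2i}`,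
where `c(t) = ⌊(t+1)/2⌋`, viewed in `ℤ[x, y, z₊, z₋] = MvPolynomial (Fin 4) ℤ`. -/
noncomputable def f1 (n : ℕ) : MvPolynomial (Fin 4) ℤ :=
  ∑ i ∈ Finset.range ((n - 1) / 2 + 1),
    C ((-1 : ℤ) ^ i * (Nat.choose (n - 1 - i) i : ℤ)) * X 0 ^ i * X 1 ^ (n - 1 - 2 * i)

/-- `f₂(x,y) = ∑_{i=0}^{c(n-1)} (-1)^i (n/(n-i)) binom(n-i, i) x^i y^{n-2i} - 2`
(each coefficient `n/(n-i) · binom(n-i, i)` is an integer). -/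
noncomputable def f2 (n : ℕ) : MvPolynomial (Fin 4) ℤ :=
  (∑ i ∈ Finset.range (n / 2 + 1),
    C ((-1 : ℤ) ^ i * ((n * Nat.choose (n - i) i / (n - i) : ℕ) : ℤ)) *
      X 0 ^ i * X 1 ^ (n - 2 * i)) - 2

/-- `f₃(x,y) = ∑_{i=1}^{c(n-2)} (-1)^{i-1} binom(n-i-2, i-1) x^{i+1} y^{n-1-2i}`. -/
noncomputable def f3 (n : ℕ) : MvPolynomial (Fin 4) ℤ :=
  ∑ i ∈ Finset.Icc 1 ((n - 1) / 2),
    C ((-1 : ℤ) ^ (i - 1) * (Nat.choose (n - i - 2) (i - 1) : ℤ)) *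
      X 0 ^ (i + 1) * X 1 ^ (n - 1 - 2 * i)

/-- `f₄(x,y) = ∑_{i=1}^{c(n-1)} (-1)^{i-1} binom(n-i-1, i-1) x^i y^{n-2i}`. -/
noncomputable def f4 (n : ℕ) : MvPolynomial (Fin 4) ℤ :=
  ∑ i ∈ Finset.Icc 1 (n / 2),
    C ((-1 : ℤ) ^ (i - 1) * (Nat.choose (n - i - 1) (i - 1) : ℤ)) *
      X 0 ^ i * X 1 ^ (n - 2 * i)

/-- The canonical inclusion `ℤ[x, y, z₊, z₋] → ℤ[X]` of polynomial rings. -/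
noncomputable def incl (k : Type*) :
    MvPolynomial (Fin 4) ℤ →+* MvPolynomial (BigVar k) ℤ :=
  (rename (Sum.inl : Fin 4 → BigVar k)).toRingHom

/-- `f₁, f₂, f₃, f₄` viewed inside `ℤ[X]`. -/
noncomputable def F1 (n : ℕ) (k : Type*) : MvPolynomial (BigVar k) ℤ := incl k (f1 n)
noncomputable def F2 (n : ℕ) (k : Type*) : MvPolynomial (BigVar k) ℤ := incl k (f2 n)
noncomputable def F3 (n : ℕ) (k : Type*) : MvPolynomial (BigVar k) ℤ := incl k (f3 n)
noncomputable def F4 (n : ℕ) (k : Type*) : MvPolynomial (BigVar k) ℤ := incl k (f4 n)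

/-- The ideal `I₀` of `ℤ[X]`, generated by `x^n - 1`; `f₁f₂`;
`z₊z₋ - 1 - f₁(2y + 4f₃)`; `f₁(z₊ - 1 - 2f₄)`; `f₁(z₊ - z₋)`;
`f₁(w_{m,η} - m - m f₄)`; `(z₊ - f₄)w_{m,η} - m x f₁²`; `(z₋ - f₄)w_{m,η} - m f₁(y + f₃)`;
`w_{m,η}w_{s,α} - m s x f₁²` for `η ≠ α`; and
`w_{m,η}(w_{t,η} - 1 - f₄) - (t-1) m x f₁²` for `m ≤ t`. -/
noncomputable def idealI0 (n : ℕ) (k : Type*) : Ideal (MvPolynomial (BigVar k) ℤ) :=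
  Ideal.span
    (({X (Sum.inl 0) ^ n - 1,
       F1 n k * F2 n k,
       X (Sum.inl 2) * X (Sum.inl 3) - 1 - F1 n k * (2 * X (Sum.inl 1) + 4 * F3 n k),
       F1 n k * (X (Sum.inl 2) - 1 - 2 * F4 n k),
       F1 n k * (X (Sum.inl 2) - X (Sum.inl 3))} :
      Set (MvPolynomial (BigVar k) ℤ)) ∪
     {p | ∃ (m : ℕ+) (η : Option k),
       p = F1 n k * (W m η - C ((m : ℕ) : ℤ) - C ((m : ℕ) : ℤ) * F4 n k)} ∪
     {p | ∃ (m : ℕ+) (η : Option k),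
       p = (X (Sum.inl 2) - F4 n k) * W m η - C ((m : ℕ) : ℤ) * X (Sum.inl 0) * F1 n k ^ 2} ∪
     {p | ∃ (m : ℕ+) (η : Option k),
       p = (X (Sum.inl 3) - F4 n k) * W m η -
         C ((m : ℕ) : ℤ) * F1 n k * (X (Sum.inl 1) + F3 n k)} ∪
     {p | ∃ (m s : ℕ+) (η α : Option k), η ≠ α ∧
       p = W m η * W s α - C ((m : ℕ) : ℤ) * C ((s : ℕ) : ℤ) * X (Sum.inl 0) * F1 n k ^ 2} ∪
     {p | ∃ (m t : ℕ+) (η : Option k), m ≤ t ∧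
       p = W m η * (W t η - 1 - F4 n k) -
         C (((t : ℕ) - 1 : ℕ) : ℤ) * C ((m : ℕ) : ℤ) * X (Sum.inl 0) * F1 n k ^ 2})

section Aux

namespace QuotI0Aux

variable (n : ℕ) (k : Type*)

local notation "π" => Ideal.Quotient.mk (idealI0 n k)

/-- The four subring generators of the "group-algebra part". -/
noncomputable def genSet : Set (MvPolynomial (BigVar k) ℤ ⧸ idealI0 n k) :=
  {Ideal.Quotient.mk (idealI0 n k) (X (Sum.inl 0)),
   Ideal.Quotient.mk (idealI0 n k) (X (Sum.inl 1)),
   Ideal.Quotient.mk (idealI0 n k) (X (Sum.inl 2)),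
   Ideal.Quotient.mk (idealI0 n k) (X (Sum.inl 3))}

/-- The candidate spanning `ℤ`-submodule. -/
noncomputable def SSpan : Submodule ℤ (MvPolynomial (BigVar k) ℤ ⧸ idealI0 n k) :=
  Submodule.span ℤ
    ((Subring.closure (genSet n k) : Set (MvPolynomial (BigVar k) ℤ ⧸ idealI0 n k)) ∪
     {p | ∃ (i l : ℕ) (m : ℕ+) (η : Option k), i ≤ n - 1 ∧ l ≤ n - 2 ∧
       p = Ideal.Quotient.mk (idealI0 n k)
         (X (Sum.inl 0) ^ i * X (Sum.inl 1) ^ l * W m η)})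

lemma incl_C (a : ℤ) : incl k (C a) = C a := by simp [incl]

lemma incl_X (j : Fin 4) : incl k (X j) = X (Sum.inl j) := by simp [incl]

lemma F1_def : F1 n k = incl k (f1 n) := rfl
lemma F3_def : F3 n k = incl k (f3 n) := rfl
lemma F4_def : F4 n k = incl k (f4 n) := rfl

lemma rel_xn : (X (Sum.inl 0) : MvPolynomial (BigVar k) ℤ) ^ n - 1 ∈ idealI0 n k := by
  apply Ideal.subset_span
  simp only [Set.mem_union, Set.mem_insert_iff, Set.mem_singleton_iff, Set.mem_setOf_eq]
  tauto

lemma rel_w1 (m : ℕ+) (η : Option k) :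
    F1 n k * (W m η - C ((m : ℕ) : ℤ) - C ((m : ℕ) : ℤ) * F4 n k) ∈ idealI0 n k := by
  apply Ideal.subset_span
  simp only [Set.mem_union, Set.mem_insert_iff, Set.mem_singleton_iff, Set.mem_setOf_eq]
  exact Or.inl (Or.inl (Or.inl (Or.inl (Or.inr ⟨m, η, rfl⟩))))

lemma rel_w2 (m : ℕ+) (η : Option k) :
    (X (Sum.inl 2) - F4 n k) * W m η - C ((m : ℕ) : ℤ) * X (Sum.inl 0) * F1 n k ^ 2
      ∈ idealI0 n k := by
  apply Ideal.subset_span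
  simp only [Set.mem_union, Set.mem_insert_iff, Set.mem_singleton_iff, Set.mem_setOf_eq]
  exact Or.inl (Or.inl (Or.inl (Or.inr ⟨m, η, rfl⟩)))

lemma rel_w3 (m : ℕ+) (η : Option k) :
    (X (Sum.inl 3) - F4 n k) * W m η -
      C ((m : ℕ) : ℤ) * F1 n k * (X (Sum.inl 1) + F3 n k) ∈ idealI0 n k := by
  apply Ideal.subset_span
  simp only [Set.mem_union, Set.mem_insert_iff, Set.mem_singleton_iff, Set.mem_setOf_eq]
  exact Or.inl (Or.inl (Or.inr ⟨m, η, rfl⟩))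

lemma rel_w4 (m s : ℕ+) (η α : Option k) (hne : η ≠ α) :
    W m η * W s α - C ((m : ℕ) : ℤ) * C ((s : ℕ) : ℤ) * X (Sum.inl 0) * F1 n k ^ 2
      ∈ idealI0 n k := by
  apply Ideal.subset_span
  simp only [Set.mem_union, Set.mem_insert_iff, Set.mem_singleton_iff, Set.mem_setOf_eq]
  exact Or.inl (Or.inr ⟨m, s, η, α, hne, rfl⟩)

lemma rel_w5 (m t : ℕ+) (η : Option k) (hmt : m ≤ t) :
    W m η * (W t η - 1 - F4 n k) -
      C (((t : ℕ) - 1 : ℕ) : ℤ) * C ((m : ℕ) : ℤ) * X (Sum.inl 0) * F1 n k ^ 2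
      ∈ idealI0 n k := by
  apply Ideal.subset_span
  simp only [Set.mem_union, Set.mem_insert_iff, Set.mem_singleton_iff, Set.mem_setOf_eq]
  exact Or.inr ⟨m, t, η, hmt, rfl⟩

lemma x_pow_n : (π (X (Sum.inl 0))) ^ n = 1 := by
  have h : π ((X (Sum.inl 0) : MvPolynomial (BigVar k) ℤ) ^ n - 1) = 0 :=
    Ideal.Quotient.eq_zero_iff_mem.mpr (rel_xn n k)
  rw [map_sub, map_pow, map_one, sub_eq_zero] at h
  exact h

lemma x_pow_mod (hn : 0 < n) (i : ℕ) :
    (π (X (Sum.inl 0))) ^ i = (π (X (Sum.inl 0))) ^ (i % n) := by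
  conv_lhs => rw [← Nat.div_add_mod i n]
  rw [pow_add, pow_mul, x_pow_n, one_pow, one_mul]

/-- `π (incl g)` lies in the subring generated by the images of `x, y, z₊, z₋`. -/
lemma mem_closure_incl (g : MvPolynomial (Fin 4) ℤ) :
    π (incl k g) ∈ Subring.closure (genSet n k) := by
  induction g using MvPolynomial.induction_on with
  | C a =>
      rw [incl_C, show (C a : MvPolynomial (BigVar k) ℤ) = ((a : ℤ) : _) from
        eq_intCast (C : ℤ →+* MvPolynomial (BigVar k) ℤ) a, map_intCast]
      exact intCast_mem _ a
  | add p q hp hq => rw [map_add, map_add]; exact add_mem hp hq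
  | mul_X p j hp =>
      rw [map_mul, map_mul, incl_X]
      refine mul_mem hp (Subring.subset_closure ?_)
      fin_cases j <;> simp [genSet]

/-- Distributing a sum of `x`-`y`-monomials over `W`. -/
lemma sum_term_mem (s : Finset ℕ) (t : ℕ → MvPolynomial (Fin 4) ℤ) (i l : ℕ)
    (m : ℕ+) (η : Option k)
    (h : ∀ j ∈ s,
      π (X (Sum.inl 0) ^ i * X (Sum.inl 1) ^ l * incl k (t j) * W m η) ∈ SSpan n k) :
    π (X (Sum.inl 0) ^ i * X (Sum.inl 1) ^ l * incl k (∑ j ∈ s, t j) * W m η)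
      ∈ SSpan n k := by
  rw [map_sum, Finset.mul_sum, Finset.sum_mul, map_sum]
  exact Submodule.sum_mem _ h

lemma single_term_mem (S : Submodule ℤ (MvPolynomial (BigVar k) ℤ ⧸ idealI0 n k))
    (a : ℤ) (e d i l : ℕ) (m : ℕ+) (η : Option k)
    (h : π (X (Sum.inl 0) ^ (i + e) * X (Sum.inl 1) ^ (l + d) * W m η) ∈ S) :
    π (X (Sum.inl 0) ^ i * X (Sum.inl 1) ^ l * incl k (C a * X 0 ^ e * X 1 ^ d) * W m η)
      ∈ S := by
  have key : (X (Sum.inl 0) ^ i * X (Sum.inl 1) ^ l * incl k (C a * X 0 ^ e * X 1 ^ d) *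
      W m η : MvPolynomial (BigVar k) ℤ)
      = C a * (X (Sum.inl 0) ^ (i + e) * X (Sum.inl 1) ^ (l + d) * W m η) := by
    rw [map_mul, map_mul, map_pow, map_pow, incl_C, incl_X, incl_X, pow_add, pow_add]
    ring
  rw [key, map_mul, show π (C a) = ((a : ℤ) : MvPolynomial (BigVar k) ℤ ⧸ idealI0 n k) from by
      rw [show (C a : MvPolynomial (BigVar k) ℤ) = ((a : ℤ) : _) from
        eq_intCast (C : ℤ →+* MvPolynomial (BigVar k) ℤ) a, map_intCast],
    ← zsmul_eq_mul]
  exact Submodule.smul_mem _ _ h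

/-- The "tail" of `f₁`, i.e. `f₁ - y^{n-1}`. -/
noncomputable def tailP : MvPolynomial (Fin 4) ℤ :=
  ∑ j ∈ Finset.Icc 1 ((n - 1) / 2),
    C ((-1 : ℤ) ^ j * (Nat.choose (n - 1 - j) j : ℤ)) * X 0 ^ j * X 1 ^ (n - 1 - 2 * j)

lemma f1_decomp : f1 n = X 1 ^ (n - 1) + tailP n := by
  unfold f1 tailP
  have h : Finset.range ((n - 1) / 2 + 1) = insert 0 (Finset.Icc 1 ((n - 1) / 2)) := by
    ext j
    simp only [Finset.mem_range, Finset.mem_insert, Finset.mem_Icc]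
    omega
  rw [h, Finset.sum_insert (by simp)]
  norm_num

/-- Key lemma: all `π (x^i y^l w_{m,η})` lie in the span (no bounds on `i`, `l`). -/
lemma mem_w (hn : 2 < n) (i l : ℕ) (m : ℕ+) (η : Option k) :
    π (X (Sum.inl 0) ^ i * X (Sum.inl 1) ^ l * W m η) ∈ SSpan n k := by
  induction l using Nat.strong_induction_on generalizing i with
  | _ l IH =>
  by_cases hl : l ≤ n - 2
  · have hmk : π (X (Sum.inl 0) ^ i * X (Sum.inl 1) ^ l * W m η)
        = π (X (Sum.inl 0) ^ (i % n) * X (Sum.inl 1) ^ l * W m η) := by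
      calc π (X (Sum.inl 0) ^ i * X (Sum.inl 1) ^ l * W m η)
          = π (X (Sum.inl 0)) ^ i * π (X (Sum.inl 1) ^ l) * π (W m η) := by
            rw [map_mul, map_mul, map_pow]
        _ = π (X (Sum.inl 0)) ^ (i % n) * π (X (Sum.inl 1) ^ l) * π (W m η) := by
            rw [x_pow_mod n k (by omega) i]
        _ = π (X (Sum.inl 0) ^ (i % n) * X (Sum.inl 1) ^ l * W m η) := by
            simp only [map_mul, map_pow]
    rw [hmk]
    have hin : i % n < n := Nat.mod_lt _ (by omega)
    exact Submodule.subset_span (Or.inr ⟨i % n, l, m, η, by omega, hl, rfl⟩)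
  · push_neg at hl
    have hl1 : n - 1 ≤ l := by omega
    have key : π (X (Sum.inl 0) ^ i * X (Sum.inl 1) ^ l * W m η)
        = π (X (Sum.inl 0) ^ i * X (Sum.inl 1) ^ (l - (n - 1)) *
              incl k (C ((m : ℕ) : ℤ) * f1 n * (1 + f4 n)))
          - π (X (Sum.inl 0) ^ i * X (Sum.inl 1) ^ (l - (n - 1)) * incl k (tailP n) *
              W m η) := by
      rw [← map_sub, Ideal.Quotient.eq]
      have h1 : (X (Sum.inl 1) : MvPolynomial (BigVar k) ℤ) ^ l
          = X (Sum.inl 1) ^ (l - (n - 1)) * X (Sum.inl 1) ^ (n - 1) := by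
        rw [← pow_add]; congr 1; omega
      have h2 : (X (Sum.inl 1) : MvPolynomial (BigVar k) ℤ) ^ (n - 1)
          = F1 n k - incl k (tailP n) := by
        have : F1 n k = X (Sum.inl 1) ^ (n - 1) + incl k (tailP n) := by
          rw [show F1 n k = incl k (f1 n) from rfl, f1_decomp, map_add, map_pow, incl_X]
        rw [this]; ring
      have h3 : incl k (C ((m : ℕ) : ℤ) * f1 n * (1 + f4 n))
          = C ((m : ℕ) : ℤ) * F1 n k * (1 + F4 n k) := by
        simp only [map_mul, map_add, map_one, incl_C, F1_def, F4_def]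
      have heq : X (Sum.inl 0) ^ i * X (Sum.inl 1) ^ l * W m η -
          (X (Sum.inl 0) ^ i * X (Sum.inl 1) ^ (l - (n - 1)) *
              incl k (C ((m : ℕ) : ℤ) * f1 n * (1 + f4 n)) -
            X (Sum.inl 0) ^ i * X (Sum.inl 1) ^ (l - (n - 1)) * incl k (tailP n) * W m η)
          = X (Sum.inl 0) ^ i * X (Sum.inl 1) ^ (l - (n - 1)) *
            (F1 n k * (W m η - C ((m : ℕ) : ℤ) - C ((m : ℕ) : ℤ) * F4 n k)) := by
        rw [h1, h3]
        rw [show (F1 n k : MvPolynomial (BigVar k) ℤ)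
            = X (Sum.inl 1) ^ (n - 1) + incl k (tailP n) from by rw [h2]; ring]
        ring
      rw [heq]
      exact Ideal.mul_mem_left _ _ (rel_w1 n k m η)
    rw [key]
    refine sub_mem ?_ ?_
    · have heq2 : π (X (Sum.inl 0) ^ i * X (Sum.inl 1) ^ (l - (n - 1)) *
          incl k (C ((m : ℕ) : ℤ) * f1 n * (1 + f4 n)))
          = π (incl k (X 0 ^ i * X 1 ^ (l - (n - 1)) *
              (C ((m : ℕ) : ℤ) * f1 n * (1 + f4 n)))) := by
        congr 1
        simp only [map_mul, map_pow, map_add, map_one, incl_C, incl_X]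
      rw [heq2]
      exact Submodule.subset_span (Or.inl (mem_closure_incl n k _))
    · unfold tailP
      refine sum_term_mem n k _ _ _ _ m η fun j hj => ?_
      simp only [Finset.mem_Icc] at hj
      exact single_term_mem n k _ _ _ _ _ _ m η (IH (l - (n - 1) + (n - 1 - 2 * j))
        (by omega) (i + j))

/-- `π (x^i y^l f₄ w_{m,η})` lies in the span. -/
lemma f4w_mem (hn : 2 < n) (i l : ℕ) (m : ℕ+) (η : Option k) :
    π (X (Sum.inl 0) ^ i * X (Sum.inl 1) ^ l * F4 n k * W m η) ∈ SSpan n k := by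
  rw [show F4 n k = incl k (f4 n) from rfl]
  unfold f4
  refine sum_term_mem n k _ _ _ _ m η fun j hj => ?_
  exact single_term_mem n k _ _ _ _ _ _ m η (mem_w n k hn _ _ m η)

lemma mem_A_incl (g : MvPolynomial (Fin 4) ℤ) : π (incl k g) ∈ SSpan n k :=
  Submodule.subset_span (Or.inl (mem_closure_incl n k g))

/-- Multiplication by an element of the subring part preserves the span. -/
lemma closure_mul (hn : 2 < n) {u : MvPolynomial (BigVar k) ℤ ⧸ idealI0 n k}
    (hu : u ∈ Subring.closure (genSet n k)) :
    ∀ v ∈ SSpan n k, u * v ∈ SSpan n k := by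
  induction hu using Subring.closure_induction with
  | mem u hu =>
    intro v hv
    induction hv using Submodule.span_induction with
    | mem v hvmem =>
      rcases hvmem with hvA | hvB
      · exact Submodule.subset_span (Or.inl (mul_mem (Subring.subset_closure hu) hvA))
      · obtain ⟨i, l, m, η, hi, hl, rfl⟩ := hvB
        simp only [genSet, Set.mem_insert_iff, Set.mem_singleton_iff] at hu
        rcases hu with rfl | rfl | rfl | rfl
        · rw [← map_mul,
            show (X (Sum.inl 0) : MvPolynomial (BigVar k) ℤ) *
              (X (Sum.inl 0) ^ i * X (Sum.inl 1) ^ l * W m η)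
              = X (Sum.inl 0) ^ (i + 1) * X (Sum.inl 1) ^ l * W m η from by
                rw [pow_add]; ring]
          exact mem_w n k hn _ _ m η
        · rw [← map_mul,
            show (X (Sum.inl 1) : MvPolynomial (BigVar k) ℤ) *
              (X (Sum.inl 0) ^ i * X (Sum.inl 1) ^ l * W m η)
              = X (Sum.inl 0) ^ i * X (Sum.inl 1) ^ (l + 1) * W m η from by
                rw [pow_add]; ring]
          exact mem_w n k hn _ _ m η
        · -- z₊
          have key : π (X (Sum.inl 2)) *
              π (X (Sum.inl 0) ^ i * X (Sum.inl 1) ^ l * W m η)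
              = π (X (Sum.inl 0) ^ i * X (Sum.inl 1) ^ l * F4 n k * W m η)
                + π (incl k (X 0 ^ i * X 1 ^ l *
                    (C ((m : ℕ) : ℤ) * X 0 * f1 n ^ 2))) := by
            rw [← map_mul, ← map_add, Ideal.Quotient.eq]
            have h3 : incl k (X 0 ^ i * X 1 ^ l * (C ((m : ℕ) : ℤ) * X 0 * f1 n ^ 2))
                = X (Sum.inl 0) ^ i * X (Sum.inl 1) ^ l *
                  (C ((m : ℕ) : ℤ) * X (Sum.inl 0) * F1 n k ^ 2) := by
              simp only [map_mul, map_pow, incl_C, incl_X, F1_def]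
            rw [h3,
              show X (Sum.inl 2) * (X (Sum.inl 0) ^ i * X (Sum.inl 1) ^ l * W m η) -
                (X (Sum.inl 0) ^ i * X (Sum.inl 1) ^ l * F4 n k * W m η +
                  X (Sum.inl 0) ^ i * X (Sum.inl 1) ^ l *
                    (C ((m : ℕ) : ℤ) * X (Sum.inl 0) * F1 n k ^ 2))
                = X (Sum.inl 0) ^ i * X (Sum.inl 1) ^ l *
                  ((X (Sum.inl 2) - F4 n k) * W m η -
                    C ((m : ℕ) : ℤ) * X (Sum.inl 0) * F1 n k ^ 2) from by ring]
            exact Ideal.mul_mem_left _ _ (rel_w2 n k m η)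
          rw [key]
          exact add_mem (f4w_mem n k hn i l m η) (mem_A_incl n k _)
        · -- z₋
          have key : π (X (Sum.inl 3)) *
              π (X (Sum.inl 0) ^ i * X (Sum.inl 1) ^ l * W m η)
              = π (X (Sum.inl 0) ^ i * X (Sum.inl 1) ^ l * F4 n k * W m η)
                + π (incl k (X 0 ^ i * X 1 ^ l *
                    (C ((m : ℕ) : ℤ) * f1 n * (X 1 + f3 n)))) := by
            rw [← map_mul, ← map_add, Ideal.Quotient.eq]
            have h3 : incl k (X 0 ^ i * X 1 ^ l * (C ((m : ℕ) : ℤ) * f1 n * (X 1 + f3 n)))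
                = X (Sum.inl 0) ^ i * X (Sum.inl 1) ^ l *
                  (C ((m : ℕ) : ℤ) * F1 n k * (X (Sum.inl 1) + F3 n k)) := by
              simp only [map_mul, map_add, map_pow, incl_C, incl_X, F1_def, F3_def]
            rw [h3,
              show X (Sum.inl 3) * (X (Sum.inl 0) ^ i * X (Sum.inl 1) ^ l * W m η) -
                (X (Sum.inl 0) ^ i * X (Sum.inl 1) ^ l * F4 n k * W m η +
                  X (Sum.inl 0) ^ i * X (Sum.inl 1) ^ l *
                    (C ((m : ℕ) : ℤ) * F1 n k * (X (Sum.inl 1) + F3 n k)))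
                = X (Sum.inl 0) ^ i * X (Sum.inl 1) ^ l *
                  ((X (Sum.inl 3) - F4 n k) * W m η -
                    C ((m : ℕ) : ℤ) * F1 n k * (X (Sum.inl 1) + F3 n k)) from by ring]
            exact Ideal.mul_mem_left _ _ (rel_w3 n k m η)
          rw [key]
          exact add_mem (f4w_mem n k hn i l m η) (mem_A_incl n k _)
    | zero => simp
    | add v w hv hw ihv ihw => rw [mul_add]; exact add_mem ihv ihw
    | smul a v hv ihv => rw [mul_smul_comm]; exact Submodule.smul_mem _ _ ihv
  | zero => intro v hv; simp
  | one => intro v hv; simpa using hv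
  | add x y hx hy ihx ihy => intro v hv; rw [add_mul]; exact add_mem (ihx v hv) (ihy v hv)
  | neg x hx ihx =>
    intro v hv
    have h := neg_mem (ihx v hv)
    exact (congrArg (· ∈ SSpan n k) (neg_mul x v)).mpr h
  | mul x y hx hy ihx ihy => intro v hv; rw [mul_assoc]; exact ihx _ (ihy v hv)

/-- Multiplication by `π (w_{m,η})` preserves the span. -/
lemma w_mul (hn : 2 < n) {v : MvPolynomial (BigVar k) ℤ ⧸ idealI0 n k}
    (hv : v ∈ SSpan n k) (m : ℕ+) (η : Option k) : v * π (W m η) ∈ SSpan n k := by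
  induction hv using Submodule.span_induction with
  | mem v hvmem =>
    rcases hvmem with hvA | hvB
    · refine closure_mul n k hn hvA _ ?_
      have h := mem_w n k hn 0 0 m η
      simpa using h
    · obtain ⟨i, l, m', η', hi, hl, rfl⟩ := hvB
      by_cases hee : η' = η
      · subst hee
        rcases le_total m' m with hmm | hmm
        · have key : π (X (Sum.inl 0) ^ i * X (Sum.inl 1) ^ l * W m' η') * π (W m η')
              = π (X (Sum.inl 0) ^ i * X (Sum.inl 1) ^ l * W m' η')
                + π (X (Sum.inl 0) ^ i * X (Sum.inl 1) ^ l * F4 n k * W m' η')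
                + π (incl k (X 0 ^ i * X 1 ^ l *
                    (C (((m : ℕ) - 1 : ℕ) : ℤ) * C ((m' : ℕ) : ℤ) * X 0 * f1 n ^ 2))) := by
            rw [← map_mul, ← map_add, ← map_add, Ideal.Quotient.eq]
            have h3 : incl k (X 0 ^ i * X 1 ^ l *
                (C (((m : ℕ) - 1 : ℕ) : ℤ) * C ((m' : ℕ) : ℤ) * X 0 * f1 n ^ 2))
                = X (Sum.inl 0) ^ i * X (Sum.inl 1) ^ l *
                  (C (((m : ℕ) - 1 : ℕ) : ℤ) * C ((m' : ℕ) : ℤ) * X (Sum.inl 0) *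
                    F1 n k ^ 2) := by
              simp only [map_mul, map_pow, incl_C, incl_X, F1_def]
            rw [h3,
              show X (Sum.inl 0) ^ i * X (Sum.inl 1) ^ l * W m' η' * W m η' -
                (X (Sum.inl 0) ^ i * X (Sum.inl 1) ^ l * W m' η' +
                  X (Sum.inl 0) ^ i * X (Sum.inl 1) ^ l * F4 n k * W m' η' +
                  X (Sum.inl 0) ^ i * X (Sum.inl 1) ^ l *
                    (C (((m : ℕ) - 1 : ℕ) : ℤ) * C ((m' : ℕ) : ℤ) * X (Sum.inl 0) *
                      F1 n k ^ 2))
                = X (Sum.inl 0) ^ i * X (Sum.inl 1) ^ l *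
                  (W m' η' * (W m η' - 1 - F4 n k) -
                    C (((m : ℕ) - 1 : ℕ) : ℤ) * C ((m' : ℕ) : ℤ) * X (Sum.inl 0) *
                      F1 n k ^ 2) from by ring]
            exact Ideal.mul_mem_left _ _ (rel_w5 n k m' m η' hmm)
          rw [key]
          exact add_mem (add_mem (mem_w n k hn i l m' η') (f4w_mem n k hn i l m' η'))
            (mem_A_incl n k _)
        · have key : π (X (Sum.inl 0) ^ i * X (Sum.inl 1) ^ l * W m' η') * π (W m η')
              = π (X (Sum.inl 0) ^ i * X (Sum.inl 1) ^ l * W m η')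
                + π (X (Sum.inl 0) ^ i * X (Sum.inl 1) ^ l * F4 n k * W m η')
                + π (incl k (X 0 ^ i * X 1 ^ l *
                    (C (((m' : ℕ) - 1 : ℕ) : ℤ) * C ((m : ℕ) : ℤ) * X 0 * f1 n ^ 2))) := by
            rw [← map_mul, ← map_add, ← map_add, Ideal.Quotient.eq]
            have h3 : incl k (X 0 ^ i * X 1 ^ l *
                (C (((m' : ℕ) - 1 : ℕ) : ℤ) * C ((m : ℕ) : ℤ) * X 0 * f1 n ^ 2))
                = X (Sum.inl 0) ^ i * X (Sum.inl 1) ^ l *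
                  (C (((m' : ℕ) - 1 : ℕ) : ℤ) * C ((m : ℕ) : ℤ) * X (Sum.inl 0) *
                    F1 n k ^ 2) := by
              simp only [map_mul, map_pow, incl_C, incl_X, F1_def]
            rw [h3,
              show X (Sum.inl 0) ^ i * X (Sum.inl 1) ^ l * W m' η' * W m η' -
                (X (Sum.inl 0) ^ i * X (Sum.inl 1) ^ l * W m η' +
                  X (Sum.inl 0) ^ i * X (Sum.inl 1) ^ l * F4 n k * W m η' +
                  X (Sum.inl 0) ^ i * X (Sum.inl 1) ^ l *
                    (C (((m' : ℕ) - 1 : ℕ) : ℤ) * C ((m : ℕ) : ℤ) * X (Sum.inl 0) *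
                      F1 n k ^ 2))
                = X (Sum.inl 0) ^ i * X (Sum.inl 1) ^ l *
                  (W m η' * (W m' η' - 1 - F4 n k) -
                    C (((m' : ℕ) - 1 : ℕ) : ℤ) * C ((m : ℕ) : ℤ) * X (Sum.inl 0) *
                      F1 n k ^ 2) from by ring]
            exact Ideal.mul_mem_left _ _ (rel_w5 n k m m' η' hmm)
          rw [key]
          exact add_mem (add_mem (mem_w n k hn i l m η') (f4w_mem n k hn i l m η'))
            (mem_A_incl n k _)
      · have key : π (X (Sum.inl 0) ^ i * X (Sum.inl 1) ^ l * W m' η') * π (W m η)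
            = π (incl k (X 0 ^ i * X 1 ^ l *
                (C ((m' : ℕ) : ℤ) * C ((m : ℕ) : ℤ) * X 0 * f1 n ^ 2))) := by
          rw [← map_mul, Ideal.Quotient.eq]
          have h3 : incl k (X 0 ^ i * X 1 ^ l *
              (C ((m' : ℕ) : ℤ) * C ((m : ℕ) : ℤ) * X 0 * f1 n ^ 2))
              = X (Sum.inl 0) ^ i * X (Sum.inl 1) ^ l *
                (C ((m' : ℕ) : ℤ) * C ((m : ℕ) : ℤ) * X (Sum.inl 0) * F1 n k ^ 2) := by
            simp only [map_mul, map_pow, incl_C, incl_X, F1_def]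
          rw [h3,
            show X (Sum.inl 0) ^ i * X (Sum.inl 1) ^ l * W m' η' * W m η -
              X (Sum.inl 0) ^ i * X (Sum.inl 1) ^ l *
                (C ((m' : ℕ) : ℤ) * C ((m : ℕ) : ℤ) * X (Sum.inl 0) * F1 n k ^ 2)
              = X (Sum.inl 0) ^ i * X (Sum.inl 1) ^ l *
                (W m' η' * W m η -
                  C ((m' : ℕ) : ℤ) * C ((m : ℕ) : ℤ) * X (Sum.inl 0) * F1 n k ^ 2) from
              by ring]
          exact Ideal.mul_mem_left _ _ (rel_w4 n k m' m η' η hee)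
        rw [key]
        exact mem_A_incl n k _
  | zero => simp
  | add x y hx hy ihx ihy => rw [add_mul]; exact add_mem ihx ihy
  | smul a x hx ihx => rw [smul_mul_assoc]; exact Submodule.smul_mem _ _ ihx

lemma sspan_eq_top (hn : 2 < n) : SSpan n k = ⊤ := by
  rw [eq_top_iff]
  rintro v -
  obtain ⟨p, rfl⟩ := Ideal.Quotient.mk_surjective v
  induction p using MvPolynomial.induction_on with
  | C a =>
    have h1 : π (C a : MvPolynomial (BigVar k) ℤ)
        = a • (1 : MvPolynomial (BigVar k) ℤ ⧸ idealI0 n k) := by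
      rw [zsmul_eq_mul, mul_one,
        show (C a : MvPolynomial (BigVar k) ℤ) = ((a : ℤ) : _) from
          eq_intCast (C : ℤ →+* MvPolynomial (BigVar k) ℤ) a, map_intCast]
    rw [h1]
    exact Submodule.smul_mem _ _
      (Submodule.subset_span (Or.inl (one_mem (Subring.closure (genSet n k)))))
  | add p q hp hq => rw [map_add]; exact add_mem hp hq
  | mul_X p v hp =>
    rw [map_mul]
    cases v with
    | inl j =>
      have hXj : π (X (Sum.inl j)) ∈ Subring.closure (genSet n k) := by
        apply Subring.subset_closure
        fin_cases j <;> simp [genSet]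
      rw [mul_comm]
      exact closure_mul n k hn hXj _ hp
    | inr mp =>
      obtain ⟨m, η⟩ := mp
      exact w_mul n k hn hp m η

end QuotI0Aux

end Aux

/-- (From the proof of Theorem 3.10.) The quotient ring `ℤ[X]/I₀` is generated, as a
`ℤ`-module, by the subring of `ℤ[X]/I₀` generated by `x̄, ȳ, z̄₊, z̄₋` together with the
elements `x̄^i ȳ^l w̄_{m,η}` for `0 ≤ i ≤ n-1`, `0 ≤ l ≤ n-2`, `m ≥ 1`, `η ∈ k̄`. -/
theorem quotient_I0_spanned (n : ℕ) (hn : 2 < n) (k : Type*) [Field k] [IsAlgClosed k]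
    (q : k) (hq : orderOf q = n) :
    Submodule.span ℤ
      ((Subring.closure
          {Ideal.Quotient.mk (idealI0 n k) (X (Sum.inl 0)),
           Ideal.Quotient.mk (idealI0 n k) (X (Sum.inl 1)),
           Ideal.Quotient.mk (idealI0 n k) (X (Sum.inl 2)),
           Ideal.Quotient.mk (idealI0 n k) (X (Sum.inl 3))} :
         Set (MvPolynomial (BigVar k) ℤ ⧸ idealI0 n k)) ∪
       {p | ∃ (i l : ℕ) (m : ℕ+) (η : Option k), i ≤ n - 1 ∧ l ≤ n - 2 ∧
         p = Ideal.Quotient.mk (idealI0 n k)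
           (X (Sum.inl 0) ^ i * X (Sum.inl 1) ^ l * W m η)}) = ⊤ := by
  exact QuotI0Aux.sspan_eq_top n k hn
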